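/- Let U ⊆ ℝⁿ be an open, convex, bounded set, let K > 0, let f : U → ℝ be K-Lipschitz, and let r > 0. If the epigraph epi f := {(x, y) ∈ ℝⁿ × ℝ : x ∈ U and y ≥ f(x)} satisfies the exterior r-sphere condition, then epi f is r/(1 + K²)^{3/2}-prox-regular. -/

import Mathlib

open scoped RealInnerProductSpace

variable {E : Type*} [NormedAddCommGroup E] [InnerProductSpace ℝ E]

/-- The proximal normal cone to `A` at `a`. -/
def proxNormalCone (A : Set E) (a : E) : Set E :=
  {ζ : E | ∃ σ : ℝ, 0 ≤ σ ∧ ∀ x ∈ A, ⟪ζ, x - a⟫ ≤ σ * ‖x - a‖ ^ 2}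

/-- `A` is `r`-strongly convex: it is the intersection of a nonempty family of
closed balls of radius `r`. -/
def IsStronglyConvex (r : ℝ) (A : Set E) : Prop :=
  ∃ C : Set E, C.Nonempty ∧ A = ⋂ c ∈ C, Metric.closedBall c r

/-- `A` is `r`-spherically supported. -/
def IsSphericallySupported (r : ℝ) (A : Set E) : Prop :=
  ∀ a ∈ frontier A, ∃ ζ ∈ proxNormalCone A a, ζ ≠ 0 ∧
    ∀ x ∈ A, ⟪‖ζ‖⁻¹ • ζ, x - a⟫ ≤ -(1 / (2 * r)) * ‖x - a‖ ^ 2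

/-- `A` is epi-Lipschitz (wedged). -/
def IsEpiLipschitz (A : Set E) : Prop :=
  ∀ a ∈ frontier A, ∃ v : E, ∃ ε : ℝ, 0 < ε ∧
    ∀ a' ∈ A, ‖a' - a‖ < ε → ∀ t : ℝ, 0 ≤ t → t < ε →
      ∀ w : E, ‖w - v‖ < ε → a' + t • w ∈ A

/-- The set of farthest points of `A` from `x`. -/
def farPoints (A : Set E) (x : E) : Set E :=
  {a : E | a ∈ A ∧ ∀ b ∈ A, ‖x - b‖ ≤ ‖x - a‖}

/-- `E_r(A)`: the set of points whose farthest distance to `A` exceeds `r`. -/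
def farExceeds (r : ℝ) (A : Set E) : Set E := {x : E | ∃ a ∈ A, r < ‖x - a‖}

/-- `A` is `r`-negatively `S`-convex. -/
def IsNegSConvex (r : ℝ) (S A : Set E) : Prop :=
  ¬ ∃ a ∈ frontier A, ∃ a' ∈ frontier A, a ≠ a' ∧
      ∃ ζ ∈ proxNormalCone A a, ‖ζ‖ = 1 ∧
        ∃ ζ' ∈ proxNormalCone A a', ‖ζ'‖ = 1 ∧
          ∃ t : ℝ, r < t ∧ ∃ t' : ℝ, r < t' ∧
            a - t • ζ = a' - t' • ζ' ∧ a - t • ζ ∈ S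

/-- `A` satisfies the exterior `r`-sphere condition. -/
def SatisfiesExtSphere (r : ℝ) (A : Set E) : Prop :=
  ∀ a ∈ frontier A, ∃ ζ ∈ proxNormalCone A a, ζ ≠ 0 ∧
    ∀ x ∈ A, ⟪‖ζ‖⁻¹ • ζ, x - a⟫ ≤ (1 / (2 * r)) * ‖x - a‖ ^ 2

/-- `A` is `r`-prox-regular. -/
def IsProxRegular (r : ℝ) (A : Set E) : Prop :=
  ∀ a ∈ frontier A, ∀ ζ ∈ proxNormalCone A a, ζ ≠ 0 →
    ∀ x ∈ A, ⟪‖ζ‖⁻¹ • ζ, x - a⟫ ≤ (1 / (2 * r)) * ‖x - a‖ ^ 2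

private lemma aux_small {a b C ε₀ : ℝ} (hε₀ : 0 < ε₀)
    (h : ∀ ε : ℝ, 0 < ε → ε < ε₀ → a ≤ b + C * ε) : a ≤ b := by
  by_contra hab
  push_neg at hab
  rcases le_or_gt C 0 with hC | hC
  · have := h (ε₀ / 2) (by linarith) (by linarith)
    nlinarith
  · have hε : 0 < min (ε₀ / 2) ((a - b) / (2 * C)) :=
      lt_min (by linarith) (div_pos (by linarith) (by linarith))
    have h2 := h _ hε (lt_of_le_of_lt (min_le_left _ _) (by linarith))
    have h3 : C * min (ε₀ / 2) ((a - b) / (2 * C)) ≤ C * ((a - b) / (2 * C)) :=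
      mul_le_mul_of_nonneg_left (min_le_right _ _) hC.le
    have h4 : C * ((a - b) / (2 * C)) = (a - b) / 2 := by field_simp
    linarith

private lemma aux_pin {E : Type*} [NormedAddCommGroup E] [InnerProductSpace ℝ E]
    {U : Set E} (hUo : IsOpen U) (hUc : Convex ℝ U)
    (q : E → ℝ) (hq : ∀ x' ∈ U, ∃ ξ : E, ∀ x ∈ U, q x' + ⟪ξ, x - x'⟫ ≤ q x)
    {x₀ : E} (hx₀ : x₀ ∈ closure U) {x : E} (hx : x ∈ U)
    {L M C₁ : ℝ} (hM : 0 ≤ M) (hC₁ : 0 ≤ C₁)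
    (hlow : ∀ x' ∈ U, L - M * ‖x' - x₀‖ ^ 2 ≤ q x')
    (hupp : ∀ s : ℝ, 0 < s → s < 1 → q (x₀ + s • (x - x₀)) ≤ L + C₁ * s) :
    L ≤ q x := by
  -- convexity of q from subgradients
  have qconv : ∀ u ∈ U, ∀ w ∈ U, ∀ t : ℝ, 0 ≤ t → t ≤ 1 →
      q (t • u + (1 - t) • w) ≤ t * q u + (1 - t) * q w := by
    intro u hu w hw t ht ht1
    have hm : t • u + (1 - t) • w ∈ U := hUc hu hw ht (by linarith) (by ring)
    obtain ⟨ξ, hξ⟩ := hq _ hm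
    have h1 := hξ u hu
    have h2 := hξ w hw
    have key : t * ⟪ξ, u - (t • u + (1 - t) • w)⟫
        + (1 - t) * ⟪ξ, w - (t • u + (1 - t) • w)⟫ = 0 := by
      rw [← real_inner_smul_right, ← real_inner_smul_right, ← inner_add_right]
      have : t • (u - (t • u + (1 - t) • w)) + (1 - t) • (w - (t • u + (1 - t) • w)) = 0 := by
        module
      rw [this, inner_zero_right]
    nlinarith [mul_le_mul_of_nonneg_left h1 ht,
      mul_le_mul_of_nonneg_left h2 (by linarith : (0:ℝ) ≤ 1 - t)]
  by_cases hLq : L ≤ q x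
  · exact hLq
  push_neg at hLq
  set D := ‖x - x₀‖ with hD
  have key : ∀ t : ℝ, 0 < t → t < 1 → L - q x ≤ 0 + M * D ^ 2 * t := by
    intro t ht ht1
    have step : t * (L - q x) ≤ M * t ^ 2 * D ^ 2 := by
      apply aux_small ht (C := C₁ + (L - q x))
      intro s hs hst
      set lam : ℝ := (t - s) / (1 - s) with hlam
      have h1s : 0 < 1 - s := by linarith
      have hlam0 : 0 ≤ lam := div_nonneg (by linarith) h1s.le
      have hlam1 : lam ≤ 1 := by
        rw [hlam, div_le_one h1s]; linarith
      have hl' : lam * (1 - s) = t - s := div_mul_cancel₀ _ (ne_of_gt h1s)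
      have hlamt : lam + (1 - lam) * s = t := by linear_combination hl'
      have hxs : x₀ + s • (x - x₀) ∈ U := by
        have h' : s • x + (1 - s) • x₀ ∈ interior U :=
          hUc.combo_interior_closure_mem_interior (by rwa [hUo.interior_eq]) hx₀ hs
            (by linarith) (by ring)
        rw [hUo.interior_eq] at h'
        have : x₀ + s • (x - x₀) = s • x + (1 - s) • x₀ := by module
        rwa [this]
      have hxt : x₀ + t • (x - x₀) ∈ U := by
        have h' : t • x + (1 - t) • x₀ ∈ interior U :=
          hUc.combo_interior_closure_mem_interior (by rwa [hUo.interior_eq]) hx₀ ht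
            (by linarith) (by ring)
        rw [hUo.interior_eq] at h'
        have : x₀ + t • (x - x₀) = t • x + (1 - t) • x₀ := by module
        rwa [this]
      have hcomb : x₀ + t • (x - x₀) = lam • x + (1 - lam) • (x₀ + s • (x - x₀)) := by
        rw [← hlamt]; module
      have hcv := qconv x hx _ hxs lam hlam0 hlam1
      rw [← hcomb] at hcv
      have hup := hupp s hs (by linarith)
      have hlo := hlow _ hxt
      have hnrm : ‖x₀ + t • (x - x₀) - x₀‖ ^ 2 = t ^ 2 * D ^ 2 := by
        have : x₀ + t • (x - x₀) - x₀ = t • (x - x₀) := by module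
        rw [this, norm_smul, Real.norm_eq_abs, abs_of_pos ht, mul_pow]
      rw [hnrm] at hlo
      have hlamge : t - s ≤ lam := by
        rw [hlam, le_div_iff₀ h1s]; nlinarith
      nlinarith [mul_le_mul_of_nonneg_right hlamge (by linarith : (0:ℝ) ≤ L - q x),
        mul_le_mul_of_nonneg_left hup (by linarith : (0:ℝ) ≤ 1 - lam),
        mul_nonneg hC₁ hs.le, mul_le_mul_of_nonneg_right hlam1 (mul_nonneg hC₁ hs.le)]
    nlinarith
  have := aux_small one_pos key
  linarith

private lemma aux_sq_le {a b : ℝ} (ha : 0 ≤ a) (hb : 0 ≤ b) (h : a ^ 2 ≤ b ^ 2) : a ≤ b := by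
  by_contra hc
  push_neg at hc
  nlinarith

private lemma inner_sub_P {n : ℕ} (ν w a : WithLp 2 (EuclideanSpace ℝ (Fin n) × ℝ)) :
    ⟪ν, w - a⟫ = ⟪ν.fst, w.fst - a.fst⟫ + ν.snd * (w.snd - a.snd) := by
  simp [WithLp.prod_inner_apply, RCLike.inner_apply, WithLp.sub_fst, WithLp.sub_snd]
  ring

private lemma norm_sub_P {n : ℕ} (w a : WithLp 2 (EuclideanSpace ℝ (Fin n) × ℝ)) :
    ‖w - a‖ ^ 2 = ‖w.fst - a.fst‖ ^ 2 + (w.snd - a.snd) ^ 2 := by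
  rw [WithLp.prod_norm_sq_eq_of_L2]
  simp [WithLp.sub_fst, WithLp.sub_snd, Real.norm_eq_abs, sq_abs]

private noncomputable def mkP {n : ℕ} (x : EuclideanSpace ℝ (Fin n)) (y : ℝ) :
    WithLp 2 (EuclideanSpace ℝ (Fin n) × ℝ) := (WithLp.equiv 2 _).symm (x, y)

@[simp] private lemma mkP_fst {n : ℕ} (x : EuclideanSpace ℝ (Fin n)) (y : ℝ) :
    (mkP x y).fst = x := rfl

@[simp] private lemma mkP_snd {n : ℕ} (x : EuclideanSpace ℝ (Fin n)) (y : ℝ) :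
    (mkP x y).snd = y := rfl

set_option maxHeartbeats 8000000 in
private theorem main_aux {n : ℕ} {U : Set (EuclideanSpace ℝ (Fin n))}
    (hUo : IsOpen U) (hUc : Convex ℝ U)
    {K : ℝ} (hK : 0 ≤ K) {g : EuclideanSpace ℝ (Fin n) → ℝ}
    (hg : ∀ x y, |g x - g y| ≤ K * ‖x - y‖) (hgc : Continuous g) {r : ℝ} (hr : 0 < r)
    (hext : SatisfiesExtSphere r
      {p : WithLp 2 (EuclideanSpace ℝ (Fin n) × ℝ) | p.fst ∈ U ∧ g p.fst ≤ p.snd}) :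
    IsProxRegular (r / (1 + K ^ 2) ^ ((3 : ℝ) / 2))
      {p : WithLp 2 (EuclideanSpace ℝ (Fin n) × ℝ) | p.fst ∈ U ∧ g p.fst ≤ p.snd} := by
  classical
  set A : Set (WithLp 2 (EuclideanSpace ℝ (Fin n) × ℝ)) :=
    {p | p.fst ∈ U ∧ g p.fst ≤ p.snd} with hA
  intro a ha ζ hζcone hζne z hz
  set s := Real.sqrt (1 + K ^ 2) with hsdef
  have hs2 : s ^ 2 = 1 + K ^ 2 := Real.sq_sqrt (by positivity)
  have hs1 : 1 ≤ s := by nlinarith [Real.sqrt_nonneg (1 + K ^ 2)]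
  have hs0 : 0 < s := by linarith
  set c := s ^ 3 / (2 * r) with hcdef
  have hc0 : 0 < c := by positivity
  have hconst : 1 / (2 * (r / (1 + K ^ 2) ^ ((3 : ℝ) / 2))) = c := by
    have hpow : (1 + K ^ 2 : ℝ) ^ ((3 : ℝ) / 2) = s ^ 3 := by
      have h1 : (1 + K ^ 2 : ℝ) ^ ((3 : ℝ) / 2)
          = ((1 + K ^ 2 : ℝ) ^ ((1 : ℝ) / 2)) ^ (3 : ℕ) := by
        rw [← Real.rpow_natCast ((1 + K ^ 2 : ℝ) ^ ((1 : ℝ) / 2)) 3,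
          ← Real.rpow_mul (by positivity)]
        norm_num
      rw [h1, ← Real.sqrt_eq_rpow]
    rw [hpow, hcdef]
    rw [div_eq_div_iff (by positivity) (by positivity)]
    field_simp
  rw [hconst]
  -- unit proximal normal
  set ν := ‖ζ‖⁻¹ • ζ with hν
  have hνnorm : ‖ν‖ = 1 := norm_smul_inv_norm hζne
  obtain ⟨σ₀, hσ₀0, hσ₀⟩ := hζcone
  set σ := ‖ζ‖⁻¹ * σ₀ with hσdef
  have hσ0 : 0 ≤ σ := mul_nonneg (inv_nonneg.2 (norm_nonneg ζ)) hσ₀0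
  have hσ : ∀ w ∈ A, ⟪ν, w - a⟫ ≤ σ * ‖w - a‖ ^ 2 := by
    intro w hw
    rw [hν, real_inner_smul_left]
    calc ‖ζ‖⁻¹ * ⟪ζ, w - a⟫ ≤ ‖ζ‖⁻¹ * (σ₀ * ‖w - a‖ ^ 2) :=
          mul_le_mul_of_nonneg_left (hσ₀ w hw) (inv_nonneg.2 (norm_nonneg ζ))
      _ = σ * ‖w - a‖ ^ 2 := by rw [hσdef]; ring
  have hνn2 : ‖ν.fst‖ ^ 2 + ν.snd ^ 2 = 1 := by
    have h1 : ‖ν‖ ^ 2 = ‖ν.fst‖ ^ 2 + ν.snd ^ 2 := by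
      have := norm_sub_P ν 0
      simpa using this
    rw [hνnorm] at h1
    linarith [h1]
  have hν1le : ‖ν.fst‖ ≤ 1 :=
    aux_sq_le (norm_nonneg _) zero_le_one (by nlinarith [sq_nonneg ν.snd])
  have hν2le : |ν.snd| ≤ 1 :=
    aux_sq_le (abs_nonneg _) zero_le_one (by rw [sq_abs]; nlinarith [sq_nonneg ‖ν.fst‖])
  -- approximation from closure
  have hacl : a ∈ closure A := frontier_subset_closure ha
  have happrox : ∀ ε : ℝ, 0 < ε → ∃ w ∈ A, ‖w - a‖ < ε := by
    intro ε hε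
    obtain ⟨w, hwA, hwd⟩ := Metric.mem_closure_iff.1 hacl ε hε
    exact ⟨w, hwA, by rwa [dist_comm, dist_eq_norm] at hwd⟩
  have hcomp : ∀ w : WithLp 2 (EuclideanSpace ℝ (Fin n) × ℝ),
      ‖w.fst - a.fst‖ ≤ ‖w - a‖ ∧ |w.snd - a.snd| ≤ ‖w - a‖ := by
    intro w
    have h1 := norm_sub_P w a
    constructor
    · exact aux_sq_le (norm_nonneg _) (norm_nonneg _) (by nlinarith [sq_nonneg (w.snd - a.snd)])
    · exact aux_sq_le (abs_nonneg _) (norm_nonneg _)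
        (by rw [sq_abs]; nlinarith [sq_nonneg ‖w.fst - a.fst‖])
  -- closure description
  have hclA : ∀ p ∈ closure A, p.fst ∈ closure U ∧ g p.fst ≤ p.snd := by
    have hc1 : Continuous (fun p : WithLp 2 (EuclideanSpace ℝ (Fin n) × ℝ) => p.fst) :=
      continuous_fst.comp (WithLp.prodContinuousLinearEquiv 2 ℝ
        (EuclideanSpace ℝ (Fin n)) ℝ).continuous
    have hc2 : Continuous (fun p : WithLp 2 (EuclideanSpace ℝ (Fin n) × ℝ) => p.snd) :=
      continuous_snd.comp (WithLp.prodContinuousLinearEquiv 2 ℝ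
        (EuclideanSpace ℝ (Fin n)) ℝ).continuous
    have hTc : IsClosed {p : WithLp 2 (EuclideanSpace ℝ (Fin n) × ℝ) |
        p.fst ∈ closure U ∧ g p.fst ≤ p.snd} :=
      (isClosed_closure.preimage hc1).inter (isClosed_le (hgc.comp hc1) hc2)
    have hsubA : A ⊆ {p : WithLp 2 (EuclideanSpace ℝ (Fin n) × ℝ) |
        p.fst ∈ closure U ∧ g p.fst ≤ p.snd} := fun q hq => ⟨subset_closure hq.1, hq.2⟩
    intro p hp
    exact closure_minimal hsubA hTc hp
  -- ν.snd ≤ 0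
  have hν2 : ν.snd ≤ 0 := by
    have key : ∀ t : ℝ, 0 < t → ν.snd * t ≤ σ * t ^ 2 := by
      intro t ht
      apply aux_small one_pos (C := σ * (2 * t + 3) + 2)
      intro ε hε hε1
      obtain ⟨w, hwA, hwa⟩ := happrox ε hε
      have hw1 := (hcomp w).1
      have hw2 := (hcomp w).2
      have hwA' : mkP w.fst (w.snd + t) ∈ A := by
        refine ⟨hwA.1, ?_⟩
        have h0 := hwA.2
        simp only [mkP_fst, mkP_snd]
        linarith
      have h1 := hσ _ hwA'
      rw [inner_sub_P, norm_sub_P] at h1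
      simp only [mkP_fst, mkP_snd] at h1
      have h8 : ‖w.fst - a.fst‖ ≤ ε := le_of_lt (lt_of_le_of_lt hw1 hwa)
      have h9 : |w.snd - a.snd| ≤ ε := le_of_lt (lt_of_le_of_lt hw2 hwa)
      have h2 : -‖w.fst - a.fst‖ ≤ ⟪ν.fst, w.fst - a.fst⟫ := by
        have hcs := abs_real_inner_le_norm ν.fst (w.fst - a.fst)
        rw [abs_le] at hcs
        nlinarith [hcs.1, mul_le_mul_of_nonneg_right hν1le (norm_nonneg (w.fst - a.fst))]
      have h3 : -|w.snd - a.snd| ≤ ν.snd * (w.snd - a.snd) := by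
        have h := neg_abs_le (ν.snd * (w.snd - a.snd))
        rw [abs_mul] at h
        nlinarith [mul_le_mul_of_nonneg_right hν2le (abs_nonneg (w.snd - a.snd))]
      have h4 : (w.snd + t - a.snd) ^ 2 ≤ t ^ 2 + (2 * t + 2) * ε := by
        have h9' := abs_le.1 h9
        nlinarith [hε, hε1]
      have h5 : ‖w.fst - a.fst‖ ^ 2 ≤ ε := by nlinarith [hε1, norm_nonneg (w.fst - a.fst)]
      have h6 : ν.snd * (w.snd + t - a.snd) = ν.snd * (w.snd - a.snd) + ν.snd * t := by ring
      have h7 : σ * (‖w.fst - a.fst‖ ^ 2 + (w.snd + t - a.snd) ^ 2)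
          ≤ σ * (t ^ 2 + (2 * t + 3) * ε) := by
        apply mul_le_mul_of_nonneg_left _ hσ0
        nlinarith [h4, h5]
      nlinarith [h1, h2, h3, h6, h7, h8, h9]
    by_contra hpos
    push_neg at hpos
    have h2 : (0 : ℝ) < σ + 1 := by linarith
    set t := ν.snd / (σ + 1) with htd
    have htpos : 0 < t := div_pos hpos h2
    have hteq : (σ + 1) * t = ν.snd := by rw [htd]; field_simp
    have h5 : ν.snd * t = (σ + 1) * t * t := by rw [hteq]
    have := key t htpos
    nlinarith [mul_pos htpos htpos]
  -- semiconvexity: subgradient-type inequality at every interior graph point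
  have hsub : ∀ x' ∈ U, ∃ ξ : EuclideanSpace ℝ (Fin n),
      ∀ x ∈ U, g x' + ⟪ξ, x - x'⟫ - c * ‖x - x'‖ ^ 2 ≤ g x := by
    intro x' hx'
    have hbA : mkP x' (g x') ∈ A := ⟨hx', le_refl _⟩
    have hbF : mkP x' (g x') ∈ frontier A := by
      refine ⟨subset_closure hbA, ?_⟩
      intro hbi
      obtain ⟨ε, hε0, hball⟩ := Metric.mem_nhds_iff.1 (mem_interior_iff_mem_nhds.1 hbi)
      have hq1 : ‖mkP x' (g x' - ε / 2) - mkP x' (g x')‖ ^ 2 = (ε / 2) ^ 2 := by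
        rw [norm_sub_P]
        simp only [mkP_fst, mkP_snd, sub_self, norm_zero]
        ring
      have hqb : mkP x' (g x' - ε / 2) ∈ Metric.ball (mkP x' (g x')) ε := by
        rw [Metric.mem_ball, dist_eq_norm]
        nlinarith [norm_nonneg (mkP x' (g x' - ε / 2) - mkP x' (g x'))]
      have h2 : g ((mkP x' (g x' - ε / 2)).fst) ≤ (mkP x' (g x' - ε / 2)).snd := (hball hqb).2
      simp only [mkP_fst, mkP_snd] at h2
      linarith
    obtain ⟨η₀, hη₀cone, hη₀ne, hη₀⟩ := hext _ hbF
    set η := ‖η₀‖⁻¹ • η₀ with hηd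
    have hηineq : ∀ w ∈ A, ⟪η, w - mkP x' (g x')⟫ ≤ 1 / (2 * r) * ‖w - mkP x' (g x')‖ ^ 2 := hη₀
    have hηnorm : ‖η‖ = 1 := norm_smul_inv_norm hη₀ne
    have hηn2 : ‖η.fst‖ ^ 2 + η.snd ^ 2 = 1 := by
      have h1 : ‖η‖ ^ 2 = ‖η.fst‖ ^ 2 + η.snd ^ 2 := by
        have := norm_sub_P η 0
        simpa using this
      rw [hηnorm] at h1
      linarith [h1]
    -- η.snd ≤ 0
    have hη2 : η.snd ≤ 0 := by
      have key : ∀ t : ℝ, 0 < t → η.snd * t ≤ 1 / (2 * r) * t ^ 2 := by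
        intro t ht
        have hwA : mkP x' (g x' + t) ∈ A := ⟨hx', by simp only [mkP_fst, mkP_snd]; linarith⟩
        have h1 := hηineq _ hwA
        rw [inner_sub_P, norm_sub_P] at h1
        simp only [mkP_fst, mkP_snd, sub_self, inner_zero_right, norm_zero] at h1
        have h2 : g x' + t - g x' = t := by ring
        rw [h2] at h1
        nlinarith [h1]
      by_contra hpos
      push_neg at hpos
      have h1 := key (r * η.snd) (by positivity)
      have h2 : 1 / (2 * r) * (r * η.snd) ^ 2 = r * η.snd ^ 2 / 2 := by field_simp
      rw [h2] at h1
      nlinarith [mul_pos hr (mul_pos hpos hpos)]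
    -- vertical component bounded below
    have hβs : 1 ≤ -η.snd * s := by
      have hKb : ‖η.fst‖ ^ 2 ≤ K * (-η.snd) * ‖η.fst‖ := by
        rcases eq_or_ne η.fst 0 with h0 | h0
        · simp [h0]
        obtain ⟨ε, hε0, hball⟩ := Metric.isOpen_iff.1 hUo x' hx'
        apply aux_small (show (0:ℝ) < ε / (‖η.fst‖ + 1) by positivity)
          (C := 1 / (2 * r) * (1 + K ^ 2) * ‖η.fst‖ ^ 2)
        intro t ht htε
        have hno : (0:ℝ) < ‖η.fst‖ := norm_pos_iff.2 h0
        have hmem : x' + t • η.fst ∈ U := by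
          apply hball
          rw [Metric.mem_ball, dist_eq_norm]
          have he : x' + t • η.fst - x' = t • η.fst := by abel
          rw [he, norm_smul, Real.norm_eq_abs, abs_of_pos ht]
          have h2 : t * (‖η.fst‖ + 1) < ε := (lt_div_iff₀ (by positivity)).1 htε
          have h3 : t * ‖η.fst‖ + t = t * (‖η.fst‖ + 1) := by ring
          linarith
        have hwA : mkP (x' + t • η.fst) (g (x' + t • η.fst)) ∈ A := ⟨hmem, le_refl _⟩
        have h1 := hηineq _ hwA
        rw [inner_sub_P, norm_sub_P] at h1
        simp only [mkP_fst, mkP_snd] at h1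
        have he : x' + t • η.fst - x' = t • η.fst := by abel
        rw [he, norm_smul, real_inner_smul_right, real_inner_self_eq_norm_sq,
          Real.norm_eq_abs, abs_of_pos ht] at h1
        have h4 : |g (x' + t • η.fst) - g x'| ≤ K * (t * ‖η.fst‖) := by
          have := hg (x' + t • η.fst) x'
          rwa [he, norm_smul, Real.norm_eq_abs, abs_of_pos ht] at this
        have h4' := abs_le.1 h4
        have h5 : η.snd * (g (x' + t • η.fst) - g x') ≥ -((-η.snd) * (K * (t * ‖η.fst‖))) := by
          nlinarith [h4'.1, h4'.2, hη2]
        have h6 : (g (x' + t • η.fst) - g x') ^ 2 ≤ K ^ 2 * t ^ 2 * ‖η.fst‖ ^ 2 := by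
          nlinarith [abs_nonneg (g (x' + t • η.fst) - g x'), sq_abs (g (x' + t • η.fst) - g x'),
            mul_nonneg (mul_nonneg hK ht.le) (norm_nonneg η.fst)]
        -- h1 : t*‖η.fst‖^2 + η.snd*(Δg) ≤ 1/(2r) * ((t*‖η.fst‖)^2 + Δg^2)
        have h7 : 1 / (2 * r) * ((t * ‖η.fst‖) ^ 2 + (g (x' + t • η.fst) - g x') ^ 2)
            ≤ 1 / (2 * r) * (1 + K ^ 2) * ‖η.fst‖ ^ 2 * (t * t) := by
          have h8 : (t * ‖η.fst‖) ^ 2 + (g (x' + t • η.fst) - g x') ^ 2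
              ≤ (1 + K ^ 2) * ‖η.fst‖ ^ 2 * (t * t) := by nlinarith [h6]
          calc 1 / (2 * r) * ((t * ‖η.fst‖) ^ 2 + (g (x' + t • η.fst) - g x') ^ 2)
              ≤ 1 / (2 * r) * ((1 + K ^ 2) * ‖η.fst‖ ^ 2 * (t * t)) :=
                mul_le_mul_of_nonneg_left h8 (by positivity)
            _ = 1 / (2 * r) * (1 + K ^ 2) * ‖η.fst‖ ^ 2 * (t * t) := by ring
        nlinarith [h1, h5, h7, ht]
      rcases eq_or_ne η.fst 0 with h0 | h0
      · rw [h0] at hηn2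
        simp at hηn2
        rcases hηn2 with h9 | h9
        · exact absurd (h9 ▸ hη2) (by norm_num)
        · rw [h9, neg_neg, one_mul]
          exact hs1
      · have hno : (0:ℝ) < ‖η.fst‖ := norm_pos_iff.2 h0
        have h7 : ‖η.fst‖ ≤ K * (-η.snd) := by
          by_contra hcon
          push_neg at hcon
          nlinarith [hKb]
        have h8 : 1 ≤ (1 + K ^ 2) * η.snd ^ 2 := by
          nlinarith [hηn2, mul_self_le_mul_self (norm_nonneg η.fst) h7]
        have h10 : 1 ≤ (η.snd * s) ^ 2 := by nlinarith [h8, hs2, sq_nonneg η.snd]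
        nlinarith [h10, mul_nonneg (neg_nonneg.2 hη2) hs0.le]
    have hβ0 : 0 < -η.snd := by nlinarith [hs0]
    refine ⟨(-η.snd)⁻¹ • η.fst, ?_⟩
    intro x hx
    have hwA : mkP x (g x) ∈ A := ⟨hx, le_refl _⟩
    have h1 := hηineq _ hwA
    rw [inner_sub_P, norm_sub_P] at h1
    simp only [mkP_fst, mkP_snd] at h1
    have h4 := abs_le.1 (hg x x')
    have h6 : (g x - g x') ^ 2 ≤ K ^ 2 * ‖x - x'‖ ^ 2 := by
      nlinarith [abs_le.1 (hg x x'), abs_nonneg (g x - g x'), sq_abs (g x - g x'),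
        mul_nonneg hK (norm_nonneg (x - x'))]
    have h5 : ⟪(-η.snd)⁻¹ • η.fst, x - x'⟫ = (-η.snd)⁻¹ * ⟪η.fst, x - x'⟫ := real_inner_smul_left _ _ _
    have hkey : ⟪η.fst, x - x'⟫ ≤ (-η.snd) * (g x - g x' + c * ‖x - x'‖ ^ 2) := by
      have hcs : s ^ 2 / (2 * r) * ‖x - x'‖ ^ 2 ≤ (-η.snd) * c * ‖x - x'‖ ^ 2 := by
        have h9 : s ^ 2 ≤ -η.snd * s ^ 3 := by
          nlinarith [mul_le_mul_of_nonneg_left hβs (sq_nonneg s)]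
        calc s ^ 2 / (2 * r) * ‖x - x'‖ ^ 2
            ≤ (-η.snd * s ^ 3) / (2 * r) * ‖x - x'‖ ^ 2 :=
              mul_le_mul_of_nonneg_right
                (div_le_div_of_nonneg_right h9 (by positivity)) (sq_nonneg _)
          _ = (-η.snd) * c * ‖x - x'‖ ^ 2 := by rw [hcdef]; ring
      have h1' : ⟪η.fst, x - x'⟫ + η.snd * (g x - g x')
          ≤ s ^ 2 / (2 * r) * ‖x - x'‖ ^ 2 := by
        have : ‖x - x'‖ ^ 2 + (g x - g x') ^ 2 ≤ (1 + K ^ 2) * ‖x - x'‖ ^ 2 := by nlinarith [h6]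
        calc ⟪η.fst, x - x'⟫ + η.snd * (g x - g x')
            ≤ 1 / (2 * r) * (‖x - x'‖ ^ 2 + (g x - g x') ^ 2) := h1
          _ ≤ 1 / (2 * r) * ((1 + K ^ 2) * ‖x - x'‖ ^ 2) := by
              apply mul_le_mul_of_nonneg_left this (by positivity)
          _ = s ^ 2 / (2 * r) * ‖x - x'‖ ^ 2 := by rw [← hs2]; ring
      nlinarith [h1', hcs]
    rw [h5]
    have h11 : (-η.snd)⁻¹ * ⟪η.fst, x - x'⟫ ≤ g x - g x' + c * ‖x - x'‖ ^ 2 := by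
      rw [inv_mul_le_iff₀ hβ0]
      nlinarith [hkey]
    linarith
  -- case split: graph point or strictly above the graph
  rcases eq_or_lt_of_le (hclA a hacl).2 with heq | hlt
  · -- CASE 1 : g a.fst = a.snd (graph point, possibly over the boundary of U)
    set β := -ν.snd with hβd
    have hβ0 : 0 ≤ β := by rw [hβd]; linarith
    have hβ1 : β ≤ 1 := by rw [hβd]; have := abs_le.1 hν2le; linarith
    set q : EuclideanSpace ℝ (Fin n) → ℝ :=
      fun w => β * g w + c * ‖w - a.fst‖ ^ 2 - ⟪ν.fst, w - a.fst⟫ with hqdef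
    have hqsub : ∀ x' ∈ U, ∃ ξ : EuclideanSpace ℝ (Fin n), ∀ x ∈ U,
        q x' + ⟪ξ, x - x'⟫ ≤ q x := by
      intro x' hx'
      obtain ⟨ξ, hξ⟩ := hsub x' hx'
      refine ⟨β • ξ + (2 * c) • (x' - a.fst) - ν.fst, ?_⟩
      intro x hx
      simp only [hqdef]
      have h1 := hξ x hx
      have h2 : ‖x - a.fst‖ ^ 2 = ‖x - x'‖ ^ 2 + 2 * ⟪x - x', x' - a.fst⟫ + ‖x' - a.fst‖ ^ 2 := by
        have hdec : x - a.fst = (x - x') + (x' - a.fst) := by abel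
        rw [hdec, norm_add_sq_real]
      have h3 : ⟪β • ξ + (2 * c) • (x' - a.fst) - ν.fst, x - x'⟫
          = β * ⟪ξ, x - x'⟫ + 2 * c * ⟪x' - a.fst, x - x'⟫ - ⟪ν.fst, x - x'⟫ := by
        rw [inner_sub_left, inner_add_left, real_inner_smul_left, real_inner_smul_left]
      have h4 : ⟪ν.fst, x - a.fst⟫ = ⟪ν.fst, x - x'⟫ + ⟪ν.fst, x' - a.fst⟫ := by
        have hdec : x - a.fst = (x - x') + (x' - a.fst) := by abel
        rw [hdec, inner_add_right]
      have h5 : ⟪x - x', x' - a.fst⟫ = ⟪x' - a.fst, x - x'⟫ := real_inner_comm _ _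
      nlinarith [mul_le_mul_of_nonneg_left h1 hβ0,
        mul_nonneg (mul_nonneg hc0.le (by linarith : (0:ℝ) ≤ 1 - β)) (sq_nonneg ‖x - x'‖)]
    have hlow : ∀ x' ∈ U, β * a.snd - σ * (1 + K ^ 2) * ‖x' - a.fst‖ ^ 2 ≤ q x' := by
      intro x' hx'
      simp only [hqdef]
      have hwA : mkP x' (g x') ∈ A := ⟨hx', le_refl _⟩
      have h1 := hσ _ hwA
      rw [inner_sub_P, norm_sub_P] at h1
      simp only [mkP_fst, mkP_snd] at h1
      have h4 := abs_le.1 (hg x' a.fst)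
      have h6 : (g x' - a.snd) ^ 2 ≤ K ^ 2 * ‖x' - a.fst‖ ^ 2 := by
        nlinarith [h4.1, h4.2, mul_nonneg hK (norm_nonneg (x' - a.fst)), heq]
      have h7 : σ * (‖x' - a.fst‖ ^ 2 + (g x' - a.snd) ^ 2)
          ≤ σ * ((1 + K ^ 2) * ‖x' - a.fst‖ ^ 2) := by
        apply mul_le_mul_of_nonneg_left _ hσ0
        nlinarith [h6]
      nlinarith [h1, h7, mul_nonneg hc0.le (sq_nonneg ‖x' - a.fst‖), hβd]
    have hupp : ∀ t : ℝ, 0 < t → t < 1 → q (a.fst + t • (z.fst - a.fst)) ≤ β * a.snd +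
        (β * K * ‖z.fst - a.fst‖ + c * ‖z.fst - a.fst‖ ^ 2 + ‖ν.fst‖ * ‖z.fst - a.fst‖) * t := by
      intro t h0' h1'
      simp only [hqdef]
      have e1 : a.fst + t • (z.fst - a.fst) - a.fst = t • (z.fst - a.fst) := by abel
      rw [e1, norm_smul, real_inner_smul_right, Real.norm_eq_abs, abs_of_pos h0']
      have e4 := abs_le.1 (hg (a.fst + t • (z.fst - a.fst)) a.fst)
      rw [e1, norm_smul, Real.norm_eq_abs, abs_of_pos h0'] at e4
      have e5 := abs_le.1 (abs_real_inner_le_norm ν.fst (z.fst - a.fst))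
      have e6 : β * g (a.fst + t • (z.fst - a.fst)) ≤ β * a.snd + β * K * ‖z.fst - a.fst‖ * t := by
        have e9 : g (a.fst + t • (z.fst - a.fst)) ≤ g a.fst + K * (t * ‖z.fst - a.fst‖) := by
          nlinarith [e4.2, mul_le_mul_of_nonneg_left (le_of_lt h1') (mul_nonneg hK (norm_nonneg (z.fst - a.fst)))]
        calc β * g (a.fst + t • (z.fst - a.fst)) ≤ β * (g a.fst + K * (t * ‖z.fst - a.fst‖)) :=
              mul_le_mul_of_nonneg_left e9 hβ0
          _ = β * a.snd + β * K * ‖z.fst - a.fst‖ * t := by rw [heq]; ring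
      have e7 : c * (t * ‖z.fst - a.fst‖) ^ 2 ≤ c * ‖z.fst - a.fst‖ ^ 2 * t := by
        nlinarith [hc0.le, sq_nonneg ‖z.fst - a.fst‖, h0', h1',
          mul_nonneg (mul_nonneg hc0.le (sq_nonneg ‖z.fst - a.fst‖)) h0'.le]
      have e8 : -(t * ⟪ν.fst, z.fst - a.fst⟫) ≤ ‖ν.fst‖ * ‖z.fst - a.fst‖ * t := by
        nlinarith [e5.1, h0'.le]
      linarith [e6, e7, e8]
    have hfin := aux_pin hUo hUc q hqsub (hclA a hacl).1 hz.1
      (M := σ * (1 + K ^ 2))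
      (C₁ := β * K * ‖z.fst - a.fst‖ + c * ‖z.fst - a.fst‖ ^ 2 + ‖ν.fst‖ * ‖z.fst - a.fst‖)
      (mul_nonneg hσ0 (by positivity))
      (add_nonneg (add_nonneg (mul_nonneg (mul_nonneg hβ0 hK) (norm_nonneg _))
        (mul_nonneg hc0.le (sq_nonneg _))) (mul_nonneg (norm_nonneg _) (norm_nonneg _)))
      hlow hupp
    simp only [hqdef] at hfin
    have hzg : g z.fst ≤ z.snd := hz.2
    have hν2β : ν.snd = -β := by rw [hβd]; ring
    rw [inner_sub_P, norm_sub_P, hν2β]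
    nlinarith [hfin, mul_le_mul_of_nonneg_left hzg hβ0,
      mul_nonneg hc0.le (sq_nonneg (z.snd - a.snd))]
  · -- CASE 2 : g a.fst < a.snd
    have hν2' : 0 ≤ ν.snd := by
      have key : ∀ t : ℝ, 0 < t → t < (a.snd - g a.fst) / 2 → -ν.snd * t ≤ σ * t ^ 2 := by
        intro t ht htδ
        apply aux_small (show (0:ℝ) < min 1 ((a.snd - g a.fst) / (2 * (1 + K)))
          from lt_min one_pos (div_pos (by linarith) (by positivity)))
          (C := σ * (2 * t + 3) + 2)
        intro ε hε hεlt
        have hε1 : ε < 1 := lt_of_lt_of_le hεlt (min_le_left _ _)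
        have hε2 : ε < (a.snd - g a.fst) / (2 * (1 + K)) :=
          lt_of_lt_of_le hεlt (min_le_right _ _)
        have hεK : ε * (2 * (1 + K)) < a.snd - g a.fst :=
          (lt_div_iff₀ (by positivity)).1 hε2
        obtain ⟨w, hwA, hwa⟩ := happrox ε hε
        have hw1 := (hcomp w).1
        have hw2 := (hcomp w).2
        have h8 : ‖w.fst - a.fst‖ ≤ ε := le_of_lt (lt_of_le_of_lt hw1 hwa)
        have h9 := abs_le.1 (le_of_lt (lt_of_le_of_lt hw2 hwa))
        have hgw := abs_le.1 (hg w.fst a.fst)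
        have hwA' : mkP w.fst (w.snd - t) ∈ A := by
          refine ⟨hwA.1, ?_⟩
          simp only [mkP_fst, mkP_snd]
          have hKε : K * ‖w.fst - a.fst‖ ≤ K * ε := mul_le_mul_of_nonneg_left h8 hK
          linarith [hgw.2, h9.1, hKε, hεK, htδ]
        have h1 := hσ _ hwA'
        rw [inner_sub_P, norm_sub_P] at h1
        simp only [mkP_fst, mkP_snd] at h1
        have h2 : -‖w.fst - a.fst‖ ≤ ⟪ν.fst, w.fst - a.fst⟫ := by
          have hcs := abs_le.1 (abs_real_inner_le_norm ν.fst (w.fst - a.fst))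
          nlinarith [hcs.1, mul_le_mul_of_nonneg_right hν1le (norm_nonneg (w.fst - a.fst))]
        have h3 : -|w.snd - a.snd| ≤ ν.snd * (w.snd - a.snd) := by
          have h := neg_abs_le (ν.snd * (w.snd - a.snd))
          rw [abs_mul] at h
          nlinarith [mul_le_mul_of_nonneg_right hν2le (abs_nonneg (w.snd - a.snd))]
        have h4 : (w.snd - t - a.snd) ^ 2 ≤ t ^ 2 + (2 * t + 2) * ε := by
          nlinarith [h9.1, h9.2, hε1, hε, ht]
        have h5 : ‖w.fst - a.fst‖ ^ 2 ≤ ε := by nlinarith [hε1, norm_nonneg (w.fst - a.fst)]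
        have h6 : ν.snd * (w.snd - t - a.snd) = ν.snd * (w.snd - a.snd) - ν.snd * t := by ring
        have h7 : σ * (‖w.fst - a.fst‖ ^ 2 + (w.snd - t - a.snd) ^ 2)
            ≤ σ * (t ^ 2 + (2 * t + 3) * ε) := by
          apply mul_le_mul_of_nonneg_left _ hσ0
          nlinarith [h4, h5]
        have h9' : |w.snd - a.snd| ≤ ε := le_of_lt (lt_of_le_of_lt hw2 hwa)
        nlinarith [h1, h2, h3, h6, h7, h8, h9']
      have h2 : -ν.snd ≤ 0 := by
        apply aux_small (show (0:ℝ) < (a.snd - g a.fst) / 2 by linarith) (C := σ)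
        intro t ht htδ
        have h3 := key t ht htδ
        nlinarith [h3, ht]
      linarith
    have hν20 : ν.snd = 0 := le_antisymm hν2 hν2'
    have hhor0 : ⟪ν.fst, z.fst - a.fst⟫ ≤ 0 := by
      have hhor : ∀ w ∈ U, ⟪ν.fst, w - a.fst⟫ ≤ σ * (1 + K ^ 2) * ‖w - a.fst‖ ^ 2 := by
        intro w hw
        have hwA : mkP w (max (g w) a.snd) ∈ A := ⟨hw, le_max_left _ _⟩
        have h1 := hσ _ hwA
        rw [inner_sub_P, norm_sub_P] at h1
        simp only [mkP_fst, mkP_snd] at h1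
        rw [hν20] at h1
        have h4 : (max (g w) a.snd - a.snd) ^ 2 ≤ K ^ 2 * ‖w - a.fst‖ ^ 2 := by
          rcases max_cases (g w) a.snd with ⟨hm, hm'⟩ | ⟨hm, hm'⟩
          · rw [hm]
            have h5 := abs_le.1 (hg w a.fst)
            nlinarith [h5.1, h5.2, hlt.le, hm', mul_nonneg hK (norm_nonneg (w - a.fst))]
          · rw [hm, sub_self]
            nlinarith [sq_nonneg (K * ‖w - a.fst‖)]
        nlinarith [h1, mul_le_mul_of_nonneg_left h4 hσ0]
      apply aux_small one_pos (C := σ * (1 + K ^ 2) * ‖z.fst - a.fst‖ ^ 2)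
      intro t ht ht1
      have hmem : a.fst + t • (z.fst - a.fst) ∈ U := by
        have h' : t • z.fst + (1 - t) • a.fst ∈ interior U :=
          hUc.combo_interior_closure_mem_interior (by rw [hUo.interior_eq]; exact hz.1)
            (hclA a hacl).1 ht (by linarith) (by ring)
        rw [hUo.interior_eq] at h'
        have he : a.fst + t • (z.fst - a.fst) = t • z.fst + (1 - t) • a.fst := by module
        rwa [he]
      have h1 := hhor _ hmem
      have he : a.fst + t • (z.fst - a.fst) - a.fst = t • (z.fst - a.fst) := by abel
      rw [he, real_inner_smul_right, norm_smul, Real.norm_eq_abs, abs_of_pos ht] at h1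
      nlinarith [h1, ht]
    rw [inner_sub_P, norm_sub_P, hν20]
    nlinarith [hhor0, mul_nonneg hc0.le (sq_nonneg ‖z.fst - a.fst‖),
      mul_nonneg hc0.le (sq_nonneg (z.snd - a.snd))]

theorem statement_18 {n : ℕ} (U : Set (EuclideanSpace ℝ (Fin n)))
    (hUo : IsOpen U) (hUc : Convex ℝ U) (hUb : Bornology.IsBounded U)
    (K : ℝ) (hK : 0 < K) (f : EuclideanSpace ℝ (Fin n) → ℝ)
    (hf : LipschitzOnWith (Real.toNNReal K) f U) (r : ℝ) (hr : 0 < r)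
    (hext : SatisfiesExtSphere r
      {p : WithLp 2 (EuclideanSpace ℝ (Fin n) × ℝ) |
        (WithLp.equiv 2 (EuclideanSpace ℝ (Fin n) × ℝ) p).1 ∈ U ∧
          f (WithLp.equiv 2 (EuclideanSpace ℝ (Fin n) × ℝ) p).1 ≤
            (WithLp.equiv 2 (EuclideanSpace ℝ (Fin n) × ℝ) p).2}) :
    IsProxRegular (r / (1 + K ^ 2) ^ ((3 : ℝ) / 2))
      {p : WithLp 2 (EuclideanSpace ℝ (Fin n) × ℝ) |
        (WithLp.equiv 2 (EuclideanSpace ℝ (Fin n) × ℝ) p).1 ∈ U ∧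
          f (WithLp.equiv 2 (EuclideanSpace ℝ (Fin n) × ℝ) p).1 ≤
            (WithLp.equiv 2 (EuclideanSpace ℝ (Fin n) × ℝ) p).2} := by
  obtain ⟨g, hgL, hgeq⟩ := hf.extend_real
  have hgK : ∀ x y, |g x - g y| ≤ K * ‖x - y‖ := by
    intro x y
    have h := hgL.dist_le_mul x y
    rwa [Real.dist_eq, dist_eq_norm, Real.coe_toNNReal K hK.le] at h
  have hAeq : {p : WithLp 2 (EuclideanSpace ℝ (Fin n) × ℝ) |
      (WithLp.equiv 2 (EuclideanSpace ℝ (Fin n) × ℝ) p).1 ∈ U ∧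
        f (WithLp.equiv 2 (EuclideanSpace ℝ (Fin n) × ℝ) p).1 ≤
          (WithLp.equiv 2 (EuclideanSpace ℝ (Fin n) × ℝ) p).2}
      = {p : WithLp 2 (EuclideanSpace ℝ (Fin n) × ℝ) | p.fst ∈ U ∧ g p.fst ≤ p.snd} := by
    ext p
    change (p.fst ∈ U ∧ f p.fst ≤ p.snd) ↔ (p.fst ∈ U ∧ g p.fst ≤ p.snd)
    constructor
    · rintro ⟨h1, h2⟩
      exact ⟨h1, by rwa [← hgeq h1]⟩
    · rintro ⟨h1, h2⟩
      exact ⟨h1, by rwa [hgeq h1]⟩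
  rw [hAeq] at hext ⊢
  exact main_aux hUo hUc hK.le hgK hgL.continuous hr hext
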